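/- Let μ be a real number with 0 < μ < 1 and let β₁(μ) = (1−√(1−μ))/(1+√(1−μ)). Then the function β ↦ maxS(μ,β) is monotonically decreasing on the interval (−∞, β₁(μ)] and monotonically increasing on the interval [β₁(μ), +∞). -/

import Mathlib

/-- The maximum of the moduli of the two complex roots (counted with multiplicity) of
`λ² − (1+β)·μ·λ + β·μ = 0`; the roots are given by the quadratic formula
`((1+β)μ ± √((1+β)²μ² − 4βμ))/2` (complex square root via `cpow`). -/
noncomputable def maxS (μ β : ℝ) : ℝ :=
  max (‖(((((1 + β) * μ : ℝ) : ℂ) +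
        ((((1 + β) ^ 2 * μ ^ 2 - 4 * β * μ : ℝ) : ℂ)) ^ ((1 : ℂ) / 2)) / 2)‖)
      (‖(((((1 + β) * μ : ℝ) : ℂ) -
        ((((1 + β) ^ 2 * μ ^ 2 - 4 * β * μ : ℝ) : ℂ)) ^ ((1 : ℂ) / 2)) / 2)‖)

lemma cpow_half_nonneg (x : ℝ) (hx : 0 ≤ x) : (x:ℂ)^((1:ℂ)/2) = ((Real.sqrt x : ℝ) : ℂ) := by
  rw [show ((1:ℂ)/2) = ((1/2 : ℝ):ℂ) by norm_num, ← Complex.ofReal_cpow hx,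
    ← Real.sqrt_eq_rpow]

lemma cpow_half_neg (x : ℝ) (hx : x < 0) : (x:ℂ)^((1:ℂ)/2) = Complex.I * (Real.sqrt (-x) : ℂ) := by
  have hne : (x:ℂ) ≠ 0 := by exact_mod_cast ne_of_lt hx
  rw [Complex.cpow_def_of_ne_zero hne]
  rw [Complex.log, Complex.arg_ofReal_of_neg hx]
  rw [Complex.norm_real, Real.norm_eq_abs, abs_of_neg hx]
  rw [show ((Real.log (-x) : ℂ) + ↑Real.pi * Complex.I) * (1/2)
      = (↑(Real.log (-x) * (1/2))) + (↑(Real.pi/2)) * Complex.I by push_cast; ring]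
  rw [Complex.exp_add, Complex.exp_mul_I]
  rw [← Complex.ofReal_cos, ← Complex.ofReal_sin, Real.cos_pi_div_two, Real.sin_pi_div_two]
  rw [← Complex.ofReal_exp, ← Real.rpow_def_of_pos (by linarith : (0:ℝ) < -x), ← Real.sqrt_eq_rpow]
  push_cast
  ring

lemma maxS_of_nonneg (μ β : ℝ) (h : 0 ≤ (1 + β) ^ 2 * μ ^ 2 - 4 * β * μ) :
    maxS μ β = (|(1 + β) * μ| + Real.sqrt ((1 + β) ^ 2 * μ ^ 2 - 4 * β * μ)) / 2 := by
  unfold maxS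
  rw [cpow_half_nonneg _ h]
  set s : ℝ := (1 + β) * μ
  set d : ℝ := Real.sqrt ((1 + β) ^ 2 * μ ^ 2 - 4 * β * μ)
  have hd : 0 ≤ d := Real.sqrt_nonneg _
  rw [show ((s:ℂ) + (d:ℂ))/2 = (((s+d)/2 : ℝ) : ℂ) by push_cast; ring,
      show ((s:ℂ) - (d:ℂ))/2 = (((s-d)/2 : ℝ) : ℂ) by push_cast; ring,
      Complex.norm_real, Complex.norm_real, Real.norm_eq_abs, Real.norm_eq_abs]
  have key : ∀ u v : ℝ, 0 ≤ v → max |(u+v)/2| |(u-v)/2| = (|u|+v)/2 := by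
    intro u v hv
    rcases abs_cases u with ⟨hu, h2⟩ | ⟨hu, h2⟩
    · rw [hu, abs_of_nonneg (by linarith), max_eq_left]
      rw [abs_le]; constructor <;> linarith
    · rw [hu, max_eq_right, abs_of_nonpos (by linarith : (u-v)/2 ≤ 0)]
      · ring
      · rw [abs_of_nonpos (by linarith : (u-v)/2 ≤ 0), abs_le]
        constructor <;> linarith
  have := key s d hd
  rw [show (s:ℝ) - d = s - d by ring] at this
  rw [this]
lemma maxS_of_neg (μ β : ℝ) (h : (1 + β) ^ 2 * μ ^ 2 - 4 * β * μ < 0) :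
    maxS μ β = Real.sqrt (β * μ) := by
  unfold maxS
  rw [cpow_half_neg _ h]
  set s : ℝ := (1 + β) * μ
  set d : ℝ := Real.sqrt (-((1 + β) ^ 2 * μ ^ 2 - 4 * β * μ))
  have hd2 : d^2 = -((1 + β) ^ 2 * μ ^ 2 - 4 * β * μ) := Real.sq_sqrt (by linarith)
  have e1 : ((s:ℂ) + Complex.I * d)/2 = (↑(s/2) + ↑(d/2) * Complex.I) := by push_cast; ring
  have e2 : ((s:ℂ) - Complex.I * d)/2 = (↑(s/2) + ↑(-(d/2)) * Complex.I) := by push_cast; ring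
  rw [e1, e2, Complex.norm_add_mul_I, Complex.norm_add_mul_I]
  have : (s/2)^2 + (d/2)^2 = β * μ := by rw [div_pow, div_pow, hd2]; ring
  rw [show (s/2)^2 + (-(d/2))^2 = (s/2)^2 + (d/2)^2 by ring, this, max_self]

/-- The optimal coefficient `βopt(μ) = (1 − √(1−μ))/(1 + √(1−μ))`. -/
noncomputable def βopt (μ : ℝ) : ℝ := (1 - Real.sqrt (1 - μ)) / (1 + Real.sqrt (1 - μ))

/-- `β₁(μ) = (1 − √(1−μ))/(1 + √(1−μ))` (equals `βopt μ`). -/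
noncomputable def β₁ (μ : ℝ) : ℝ := (1 - Real.sqrt (1 - μ)) / (1 + Real.sqrt (1 - μ))

lemma Dfact (μ s β : ℝ) (hss : s^2 = 1 - μ) :
    (1+β)^2*μ^2 - 4*β*μ = (μ*β - (1-s)^2) * (μ*β - (1+s)^2) := by
  linear_combination (2*μ*β + 2*μ - (s^2 - (1-μ))) * hss

set_option maxHeartbeats 1600000 in
lemma anti_aux (μ s a b : ℝ) (h0 : 0 < μ) (h1 : μ < 1) (hss : s^2 = 1-μ)
    (hs0 : 0 < s) (hs1 : s < 1)
    (hμa : μ*a ≤ (1-s)^2) (hμb : μ*b ≤ (1-s)^2) (hab : a ≤ b) :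
    maxS μ b ≤ maxS μ a := by
  have sqrtD_le : ∀ β : ℝ, μ*β ≤ (1-s)^2 →
      Real.sqrt ((1+β)^2*μ^2 - 4*β*μ) ≤ 2 - μ*(1+β) := by
    intro β hmb
    have hpos : 0 ≤ 2 - μ*(1+β) := by nlinarith [hss]
    calc Real.sqrt ((1+β)^2*μ^2 - 4*β*μ) ≤ Real.sqrt ((2 - μ*(1+β))^2) :=
          Real.sqrt_le_sqrt (by nlinarith)
      _ = 2 - μ*(1+β) := Real.sqrt_sq hpos
  have hDa : 0 ≤ (1+a)^2*μ^2 - 4*a*μ := by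
    rw [Dfact μ s a hss]
    have f1 : μ*a - (1-s)^2 ≤ 0 := by linarith
    have f2 : μ*a - (1+s)^2 ≤ 0 := by nlinarith
    nlinarith [mul_nonneg (neg_nonneg.mpr f1) (neg_nonneg.mpr f2)]
  have hDb : 0 ≤ (1+b)^2*μ^2 - 4*b*μ := by
    rw [Dfact μ s b hss]
    have f1 : μ*b - (1-s)^2 ≤ 0 := by linarith
    have f2 : μ*b - (1+s)^2 ≤ 0 := by nlinarith
    nlinarith [mul_nonneg (neg_nonneg.mpr f1) (neg_nonneg.mpr f2)]
  rw [maxS_of_nonneg μ a hDa, maxS_of_nonneg μ b hDb]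
  set x : ℝ := Real.sqrt ((1+a)^2*μ^2 - 4*a*μ) with hx_def
  set y : ℝ := Real.sqrt ((1+b)^2*μ^2 - 4*b*μ) with hy_def
  have hx0 : 0 ≤ x := Real.sqrt_nonneg _
  have hy0 : 0 ≤ y := Real.sqrt_nonneg _
  have hx2 : x^2 = (1+a)^2*μ^2 - 4*a*μ := Real.sq_sqrt hDa
  have hy2 : y^2 = (1+b)^2*μ^2 - 4*b*μ := Real.sq_sqrt hDb
  have hbx : x ≤ 2 - μ*(1+a) := sqrtD_le a hμa
  have hby : y ≤ 2 - μ*(1+b) := sqrtD_le b hμb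
  have h2a : 2*s ≤ 2 - μ*(1+a) := by nlinarith [hss, hμa]
  have h2b : 2*s ≤ 2 - μ*(1+b) := by nlinarith [hss, hμb]
  have hdiff : x^2 - y^2 = μ*(b-a)*((2 - μ*(1+a)) + (2 - μ*(1+b))) := by
    rw [hx2, hy2]; ring
  have hμba : 0 ≤ μ*(b-a) := by nlinarith
  have key : μ*(b-a) ≤ x - y := by
    rcases eq_or_lt_of_le (add_nonneg hx0 hy0) with heq | hpos
    · have hx' : x = 0 := by linarith [hx0, hy0, heq.symm]
      have hy' : y = 0 := by linarith [hx0, hy0, heq.symm]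
      have hz : μ*(b-a) * ((2 - μ*(1+a)) + (2 - μ*(1+b))) = 0 := by
        rw [← hdiff, hx', hy']; ring
      have hCpos : 0 < (2 - μ*(1+a)) + (2 - μ*(1+b)) := by nlinarith
      have : μ*(b-a) = 0 := by
        rcases mul_eq_zero.mp hz with h' | h'
        · exact h'
        · linarith
      rw [hx', hy', this]; norm_num
    · have hsum_le : x + y ≤ (2 - μ*(1+a)) + (2 - μ*(1+b)) := by linarith
      have hpp : μ*(b-a)*(x+y) ≤ μ*(b-a)*((2 - μ*(1+a)) + (2 - μ*(1+b))) :=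
        mul_le_mul_of_nonneg_left hsum_le hμba
      have heq2 : (x-y)*(x+y) = μ*(b-a)*((2 - μ*(1+a)) + (2 - μ*(1+b))) := by
        linear_combination hdiff
      have h2 : μ*(b-a)*(x+y) ≤ (x-y)*(x+y) := by rw [heq2]; exact hpp
      exact le_of_mul_le_mul_right h2 hpos
  have hyx : y ≤ x := by nlinarith [key, hμba]
  have key' : μ*b - μ*a ≤ x - y := by linarith [key]
  rcases abs_cases ((1+b)*μ) with ⟨e, _⟩ | ⟨e, _⟩ <;> rw [e]
  · have h4 := le_abs_self ((1+a)*μ)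
    have e5 : (1+b)*μ = μ + μ*b := by ring
    have e6 : (1+a)*μ = μ + μ*a := by ring
    linarith [key', h4, e5, e6]
  · have h4 := neg_abs_le ((1+a)*μ)
    have e5 : (1+b)*μ = μ + μ*b := by ring
    have e6 : (1+a)*μ = μ + μ*a := by ring
    linarith [key', h4, e5, e6, hμba, hyx]

set_option maxHeartbeats 1600000 in
lemma mono_aux (μ s a b : ℝ) (h0 : 0 < μ) (h1 : μ < 1) (hss : s^2 = 1-μ)
    (hs0 : 0 < s) (hs1 : s < 1)
    (hμa : (1-s)^2 ≤ μ*a) (hμb : (1-s)^2 ≤ μ*b) (hab : a ≤ b)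
    (h1a : 0 < 1 + a) (h1b : 0 < 1 + b) :
    maxS μ a ≤ maxS μ b := by
  have hμab : μ * a ≤ μ * b := by nlinarith
  have hfa := Dfact μ s a hss
  have hfb := Dfact μ s b hss
  rcases le_or_gt 0 ((1+a)^2*μ^2 - 4*a*μ) with hDa | hDa <;>
    rcases le_or_gt 0 ((1+b)^2*μ^2 - 4*b*μ) with hDb | hDb
  · -- both nonneg
    rcases le_or_gt (μ*b) ((1-s)^2) with hb' | hb'
    · -- μb = (1-s)^2 so a = b
      have hab' : a = b := by nlinarith
      rw [hab']
    · -- μb > (1-s)^2, so μb ≥ (1+s)^2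
      have hμb2 : (1+s)^2 ≤ μ * b := by nlinarith [hDb, hfb]
      rcases le_or_gt (μ*a) ((1-s)^2) with ha' | ha'
      · -- μa = (1-s)^2, Da = 0
        have hμa' : μ * a = (1-s)^2 := le_antisymm ha' hμa
        have hDa0 : (1+a)^2*μ^2 - 4*a*μ = 0 := by rw [hfa, hμa']; ring
        rw [maxS_of_nonneg μ a hDa, maxS_of_nonneg μ b hDb, hDa0, Real.sqrt_zero,
          abs_of_nonneg (by positivity : (0:ℝ) ≤ (1+a)*μ),
          abs_of_nonneg (by positivity : (0:ℝ) ≤ (1+b)*μ)]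
        have he : (1+a)*μ = 2 - 2*s := by nlinarith [hss, hμa']
        have hsq : 0 ≤ Real.sqrt ((1+b)^2*μ^2 - 4*b*μ) := Real.sqrt_nonneg _
        have he2 : μ + μ*b = (1+b)*μ := by ring
        nlinarith [hss, hμb2]
      · -- μa ≥ (1+s)^2 as well
        have hμa2 : (1+s)^2 ≤ μ * a := by nlinarith [hDa, hfa]
        rw [maxS_of_nonneg μ a hDa, maxS_of_nonneg μ b hDb,
          abs_of_nonneg (by positivity : (0:ℝ) ≤ (1+a)*μ),
          abs_of_nonneg (by positivity : (0:ℝ) ≤ (1+b)*μ)]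
        have hDle : (1+a)^2*μ^2 - 4*a*μ ≤ (1+b)^2*μ^2 - 4*b*μ := by
          nlinarith [hμa2, hμb2, hμab, hss]
        have hsq := Real.sqrt_le_sqrt hDle
        nlinarith [hsq]
  · -- Da ≥ 0, Db < 0 : forces Da = 0
    have hμb2 : μ * b < (1+s)^2 := by nlinarith [hDb, hfb]
    have hμa' : μ * a = (1-s)^2 := by nlinarith [hDa, hfa, hμab, hs0]
    have hDa0 : (1+a)^2*μ^2 - 4*a*μ = 0 := by rw [hfa, hμa']; ring
    rw [maxS_of_nonneg μ a hDa, maxS_of_neg μ b hDb, hDa0, Real.sqrt_zero,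
      abs_of_nonneg (by positivity : (0:ℝ) ≤ (1+a)*μ)]
    have he : (1+a)*μ = 2 - 2*s := by nlinarith [hss, hμa']
    have heval : ((1+a)*μ + 0)/2 = Real.sqrt (a*μ) := by
      rw [he, show a*μ = μ*a by ring, hμa',
        Real.sqrt_sq (by linarith : (0:ℝ) ≤ 1 - s)]
      ring
    rw [heval]
    exact Real.sqrt_le_sqrt (by nlinarith)
  · -- Da < 0, Db ≥ 0
    have hμa2 : μ * a < (1+s)^2 := by nlinarith [hDa, hfa]
    have hμa1 : (1-s)^2 < μ * a := by nlinarith [hDa, hfa]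
    have hμb2 : (1+s)^2 ≤ μ * b := by nlinarith [hDb, hfb, hμab]
    rw [maxS_of_neg μ a hDa, maxS_of_nonneg μ b hDb,
      abs_of_nonneg (by positivity : (0:ℝ) ≤ (1+b)*μ)]
    have hle1 : Real.sqrt (a*μ) ≤ 1 + s := by
      calc Real.sqrt (a*μ) ≤ Real.sqrt ((1+s)^2) := Real.sqrt_le_sqrt (by nlinarith)
        _ = 1 + s := Real.sqrt_sq (by linarith)
    have hle2 : 2*(1+s) ≤ (1+b)*μ := by nlinarith [hss, hμb2]
    have hsq : 0 ≤ Real.sqrt ((1+b)^2*μ^2 - 4*b*μ) := Real.sqrt_nonneg _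
    linarith [abs_nonneg ((1+b)*μ)]
  · -- both neg
    rw [maxS_of_neg μ a hDa, maxS_of_neg μ b hDb]
    exact Real.sqrt_le_sqrt (by nlinarith)

theorem stmt6 (μ : ℝ) (h0 : 0 < μ) (h1 : μ < 1) :
    AntitoneOn (fun β => maxS μ β) (Set.Iic (β₁ μ)) ∧
    MonotoneOn (fun β => maxS μ β) (Set.Ici (β₁ μ)) := by
  set s : ℝ := Real.sqrt (1 - μ) with hs_def
  have hss : s^2 = 1 - μ := Real.sq_sqrt (by linarith)
  have hs0 : 0 < s := Real.sqrt_pos.mpr (by linarith)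
  have hs1 : s < 1 := by nlinarith [hss]
  have hβ₁ : β₁ μ = (1-s)/(1+s) := rfl
  have hμβ₁ : μ * β₁ μ = (1-s)^2 := by
    rw [hβ₁]; field_simp; nlinarith [hss]
  have hβ₁pos : 0 < β₁ μ := by
    rw [hβ₁]; exact div_pos (by linarith) (by linarith)
  constructor
  · intro a ha b hb hab
    simp only [Set.mem_Iic] at ha hb
    have hμa : μ * a ≤ (1-s)^2 := by
      rw [← hμβ₁]; exact mul_le_mul_of_nonneg_left ha h0.le
    have hμb : μ * b ≤ (1-s)^2 := by
      rw [← hμβ₁]; exact mul_le_mul_of_nonneg_left hb h0.le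
    exact anti_aux μ s a b h0 h1 hss hs0 hs1 hμa hμb hab
  · intro a ha b hb hab
    simp only [Set.mem_Ici] at ha hb
    have hμa : (1-s)^2 ≤ μ * a := by
      rw [← hμβ₁]; exact mul_le_mul_of_nonneg_left ha h0.le
    have hμb : (1-s)^2 ≤ μ * b := by
      rw [← hμβ₁]; exact mul_le_mul_of_nonneg_left hb h0.le
    exact mono_aux μ s a b h0 h1 hss hs0 hs1 hμa hμb hab
      (by nlinarith [hβ₁pos]) (by nlinarith [hβ₁pos])
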